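/- Let N ≥ 3. An entangled N-qubit pure state |ψ⟩ is fragile with respect to the loss of any single qubit (i.e., ρ_{¬k}(ψ) is separable for every k = 1,…,N) if and only if there exist nonzero complex numbers a, b with |a|² + |b|² = 1 and pairs of orthonormal single-qubit vectors (|e_i⟩, |e_i^⊥⟩), i = 1,…,N, such that, up to a global phase, |ψ⟩ = a |e_1,…,e_N⟩ + b |e_1^⊥,…,e_N^⊥⟩; moreover, in this representation a and b can always be chosen real and positive. -/

import Mathlib

open scoped BigOperators ComplexConjugate

noncomputable section

/-- A single-qubit unit vector in `ℂ²`. -/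
def IsUnitQubit (e : Fin 2 → ℂ) : Prop := ∑ j, Complex.normSq (e j) = 1

/-- Norm-one condition for a multiqubit vector on the register `ι`. -/
def IsUnitState {ι : Type*} [Fintype ι] [DecidableEq ι] (ψ : (ι → Fin 2) → ℂ) : Prop :=
  ∑ x, Complex.normSq (ψ x) = 1

/-- The product state `⊗ᵢ eᵢ`. -/
def prodState {ι : Type*} [Fintype ι] (e : ι → Fin 2 → ℂ) : (ι → Fin 2) → ℂ :=
  fun x => ∏ i, e i (x i)

/-- A pure state is a product state if it is a tensor product of single-qubit unit vectors. -/
def IsProductState {ι : Type*} [Fintype ι] (ψ : (ι → Fin 2) → ℂ) : Prop :=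
  ∃ e : ι → Fin 2 → ℂ, (∀ i, IsUnitQubit (e i)) ∧ ψ = prodState e

/-- A pure state is entangled if it is not a product state. -/
def IsEntangledState {ι : Type*} [Fintype ι] (ψ : (ι → Fin 2) → ℂ) : Prop :=
  ¬ IsProductState ψ

/-- The projector `|v⟩⟨v|` as a matrix. -/
def proj {α : Type*} (v : α → ℂ) : Matrix α α ℂ :=
  Matrix.of fun x y => v x * conj (v y)

/-- A density matrix on the qubit register `ι` is separable if it is a finite convex
combination of projectors onto product states (and entangled otherwise). -/
def IsSeparableDensity {ι : Type*} [Fintype ι] (ρ : Matrix (ι → Fin 2) (ι → Fin 2) ℂ) : Prop :=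
  ∃ (n : ℕ) (w : Fin n → ℝ) (e : Fin n → ι → Fin 2 → ℂ),
    (∀ m, 0 ≤ w m) ∧ (∑ m, w m = 1) ∧ (∀ m i, IsUnitQubit (e m i)) ∧
    ρ = ∑ m, (w m : ℂ) • proj (prodState (e m))

/-- Assemble a full assignment of the `N` qubits from an assignment `x` of the qubits outside
`S` and an assignment `z` of the qubits in `S`. -/
def mergeCompl {N : ℕ} (S : Finset (Fin N)) (x : {i : Fin N // i ∉ S} → Fin 2)
    (z : {i : Fin N // i ∈ S} → Fin 2) : Fin N → Fin 2 :=
  fun i => if h : i ∈ S then z ⟨i, h⟩ else x ⟨i, h⟩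

/-- The reduced density operator `ρ_{¬S}(ψ)`: the partial trace of `|ψ⟩⟨ψ|` over the qubits
in `S`. -/
def reducedState {N : ℕ} (ψ : (Fin N → Fin 2) → ℂ) (S : Finset (Fin N)) :
    Matrix ({i : Fin N // i ∉ S} → Fin 2) ({i : Fin N // i ∉ S} → Fin 2) ℂ :=
  Matrix.of fun x y => ∑ z : {i : Fin N // i ∈ S} → Fin 2,
    ψ (mergeCompl S x z) * conj (ψ (mergeCompl S y z))

set_option linter.unusedSectionVars false
set_option maxHeartbeats 1000000

section SpanLemma
variable {α : Type*} [Fintype α] [DecidableEq α]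

private lemma sum_rearrange (ζ : α → ℂ) {n : ℕ} (c : Fin n → ℂ) (V : Fin n → α → ℂ)
    (g : Fin n → ℂ) :
    ∑ x, ζ x * (∑ m, c m * (V m x * g m))
      = ∑ m, c m * ((∑ x, ζ x * V m x) * g m) := by
  simp only [Finset.mul_sum]
  rw [Finset.sum_comm]
  refine Finset.sum_congr rfl fun m _ => ?_
  calc ∑ x, ζ x * (c m * (V m x * g m))
      = ∑ x, (ζ x * V m x) * (c m * g m) := Finset.sum_congr rfl fun x _ => by ring
    _ = (∑ x, ζ x * V m x) * (c m * g m) := by rw [← Finset.sum_mul]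
    _ = c m * ((∑ x, ζ x * V m x) * g m) := by ring

/-- Range lemma: components of a PSD decomposition lie in the span of any
pair `u 0, u 1` through which the matrix factors. -/
lemma mem_span_of_decomp {n : ℕ} {w : Fin n → ℝ} (hw : ∀ m, 0 ≤ w m)
    {V : Fin n → α → ℂ} {u : Fin 2 → α → ℂ} {t : Fin 2 → ℂ}
    (h : ∀ x y, ∑ m, (w m : ℂ) * (V m x * conj (V m y))
        = ∑ j : Fin 2, t j * (u j x * conj (u j y))) :
    ∀ m, w m ≠ 0 → ∃ a b : ℂ, ∀ x, V m x = a * u 0 x + b * u 1 x := by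
  intro m hm
  set E := EuclideanSpace ℂ α with hE
  let U : Fin 2 → E := fun j => WithLp.toLp 2 (u j)
  let K : Submodule ℂ E := Submodule.span ℂ {U 0, U 1}
  set T : (α → ℂ) → ℂ := fun v => ∑ x, conj (v x) * V m x with hT
  have hVK : (WithLp.toLp 2 (V m) : E) ∈ K := by
    rw [← Submodule.orthogonal_orthogonal K]
    intro z hz
    have hzu : ∀ j : Fin 2, (∑ x, conj (z x) * u j x) = 0 := by
      intro j
      have hUj : U j ∈ K := by
        apply Submodule.subset_span
        fin_cases j
        · exact Set.mem_insert _ _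
        · exact Set.mem_insert_of_mem _ rfl
      have h0 : (inner ℂ (U j) z : ℂ) = 0 := (Submodule.mem_orthogonal K z).mp hz _ hUj
      rw [PiLp.inner_apply] at h0
      simp only [RCLike.inner_apply] at h0
      have h1 := congrArg conj h0
      simp only [map_sum, map_mul, Complex.conj_conj, map_zero] at h1
      rw [← h1]
    -- Step A
    have stepA : ∀ y, ∑ m', (w m' : ℂ) *
        (conj (V m' y) * (∑ x, conj (z x) * V m' x)) = 0 := by
      intro y
      have h2 := congrArg (fun s => ∑ x, conj (z x) * s x)
        (funext fun x => h x y)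
      simp only at h2
      rw [sum_rearrange (fun x => conj (z x)) _ V (fun m' => conj (V m' y)),
        sum_rearrange (fun x => conj (z x)) t u (fun j => conj (u j y))] at h2
      have h3 : ∑ j : Fin 2, t j * ((∑ x, conj (z x) * u j x) * conj (u j y)) = 0 := by
        refine Finset.sum_eq_zero fun j _ => ?_
        rw [hzu j]; ring
      rw [h3] at h2
      rw [← h2]
      exact Finset.sum_congr rfl fun m' _ => by ring
    -- Step B
    have stepB : ∑ m', (w m' : ℂ) *
        ((∑ x, conj (z x) * V m' x) * conj (∑ x, conj (z x) * V m' x)) = 0 := by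
      have h2 := congrArg (fun s => ∑ y, z y * s y)
        (funext fun y => stepA y)
      simp only [mul_zero, Finset.sum_const_zero] at h2
      rw [sum_rearrange z _ (fun m' y => conj (V m' y))
        (fun m' => (∑ x, conj (z x) * V m' x))] at h2
      rw [← h2]
      refine Finset.sum_congr rfl fun m' _ => ?_
      have h4 : (∑ y, z y * conj (V m' y)) = conj (∑ x, conj (z x) * V m' x) := by
        rw [map_sum]
        exact Finset.sum_congr rfl fun y _ => by rw [map_mul, Complex.conj_conj]
      rw [h4]; ring
    -- conclude T z (V m) = 0
    have hreal : ∑ m', w m' * Complex.normSq (∑ x, conj (z x) * V m' x) = 0 := by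
      have h5 : ∑ m', ((w m' * Complex.normSq (∑ x, conj (z x) * V m' x) : ℝ) : ℂ) = 0 := by
        rw [← stepB]
        refine Finset.sum_congr rfl fun m' _ => ?_
        rw [Complex.mul_conj]
        push_cast
        ring
      exact_mod_cast h5
    have hterm : w m * Complex.normSq (∑ x, conj (z x) * V m x) = 0 := by
      have := (Finset.sum_eq_zero_iff_of_nonneg (fun m' _ =>
        mul_nonneg (hw m') (Complex.normSq_nonneg _))).mp hreal m (Finset.mem_univ m)
      exact this
    have hns : Complex.normSq (∑ x, conj (z x) * V m x) = 0 := by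
      rcases mul_eq_zero.mp hterm with h' | h'
      · exact absurd h' hm
      · exact h'
    have : (∑ x, conj (z x) * V m x) = 0 := by
      exact Complex.normSq_eq_zero.mp hns
    rw [PiLp.inner_apply]
    simp only [RCLike.inner_apply]
    rw [← this]
    exact Finset.sum_congr rfl fun x _ => mul_comm _ _
  obtain ⟨a, b, hab⟩ := Submodule.mem_span_pair.mp hVK
  refine ⟨a, b, fun x => ?_⟩
  have := congrArg (fun v : E => v x) hab
  simpa using this.symm

end SpanLemma

def Indep {α : Type*} (u v : α → ℂ) : Prop :=
  ∀ A B : ℂ, (∀ x, A * u x + B * v x = 0) → A = 0 ∧ B = 0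

/-- Dyad independence. -/
lemma dyad_indep {u v : α → ℂ} (h : Indep u v) {A B C D : ℂ}
    (hrel : ∀ x y, A * (u x * conj (u y)) + B * (u x * conj (v y))
      + C * (v x * conj (u y)) + D * (v x * conj (v y)) = 0) :
    A = 0 ∧ B = 0 ∧ C = 0 ∧ D = 0 := by
  have key : ∀ y, (A * conj (u y) + B * conj (v y)) = 0 ∧
      (C * conj (u y) + D * conj (v y)) = 0 := by
    intro y
    refine h _ _ (fun x => ?_)
    have := hrel x y
    ring_nf at this ⊢
    linear_combination this
  have h1 : conj A = 0 ∧ conj B = 0 := by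
    refine h _ _ (fun y => ?_)
    have := (key y).1
    have := congrArg conj this
    simpa [map_add, map_mul, mul_comm] using this
  have h2 : conj C = 0 ∧ conj D = 0 := by
    refine h _ _ (fun y => ?_)
    have := (key y).2
    have := congrArg conj this
    simpa [map_add, map_mul, mul_comm] using this
  refine ⟨?_, ?_, ?_, ?_⟩
  · simpa using congrArg conj h1.1
  · simpa using congrArg conj h1.2
  · simpa using congrArg conj h2.1
  · simpa using congrArg conj h2.2


section Qubit2

/-- proportionality from vanishing determinant -/
lemma det0_prop {v w : Fin 2 → ℂ} (hv : ∃ j, v j ≠ 0) (hw : ∃ j, w j ≠ 0)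
    (hdet : v 0 * w 1 = v 1 * w 0) : ∃ γ : ℂ, γ ≠ 0 ∧ ∀ j, w j = γ * v j := by
  by_cases h0 : v 0 ≠ 0
  · refine ⟨w 0 / v 0, ?_, ?_⟩
    · intro hγ
      have hw0 : w 0 = 0 := by
        field_simp at hγ; simpa using hγ
      have hw1 : w 1 = 0 := by
        have := hdet
        rw [hw0, mul_zero] at this
        exact (mul_eq_zero.mp this).resolve_left h0
      rcases hw with ⟨j, hj⟩
      fin_cases j <;> simp_all
    · intro j
      fin_cases j
      · field_simp; rfl
      · field_simp
        show w 1 * v 0 = w 0 * v 1; linear_combination hdet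
  · push_neg at h0
    have h1 : v 1 ≠ 0 := by
      rcases hv with ⟨j, hj⟩; fin_cases j <;> simp_all
    have hw0 : w 0 = 0 := by
      have := hdet
      rw [h0, zero_mul] at this
      exact (mul_eq_zero.mp this.symm).resolve_left h1
    refine ⟨w 1 / v 1, ?_, ?_⟩
    · intro hγ
      have hw1 : w 1 = 0 := by field_simp at hγ; simpa using hγ
      rcases hw with ⟨j, hj⟩; fin_cases j <;> simp_all
    · intro j
      fin_cases j
      · simp [hw0, h0]
      · field_simp; rfl
end Qubit2

section Prods
variable {ι : Type*} [Fintype ι] [DecidableEq ι]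

/-- P1 : a sitewise-nonzero product has a nonvanishing point. -/
lemma prod_exists_ne_zero {p : ι → Fin 2 → ℂ} (hp : ∀ i, ∃ j, p i j ≠ 0) :
    ∃ x : ι → Fin 2, ∏ i, p i (x i) ≠ 0 := by
  refine ⟨fun i => (hp i).choose, Finset.prod_ne_zero_iff.mpr fun i _ => (hp i).choose_spec⟩

/-- P2 : global proportionality forces sitewise proportionality (via dets). -/
lemma det_zero_of_global_prop {p q : ι → Fin 2 → ℂ} (hp : ∀ i, ∃ j, p i j ≠ 0)
    (hq : ∀ i, ∃ j, q i j ≠ 0) {c : ℂ}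
    (h : ∀ x : ι → Fin 2, ∏ i, q i (x i) = c * ∏ i, p i (x i)) :
    ∀ i, p i 0 * q i 1 = p i 1 * q i 0 := by
  have hc : c ≠ 0 := by
    intro hc0
    obtain ⟨x, hx⟩ := prod_exists_ne_zero hq
    rw [h x, hc0, zero_mul] at hx
    exact hx rfl
  intro i
  set x₀ : ι → Fin 2 := fun l => (hp l).choose with hx₀
  have hpx : ∀ l, p l (x₀ l) ≠ 0 := fun l => (hp l).choose_spec
  set C : ℂ := ∏ l ∈ Finset.univ.erase i, p l (x₀ l) with hC
  set D : ℂ := ∏ l ∈ Finset.univ.erase i, q l (x₀ l) with hD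
  have hCne : C ≠ 0 := Finset.prod_ne_zero_iff.mpr fun l _ => hpx l
  have key : ∀ j, q i j * D = c * (p i j * C) := by
    intro j
    have h1 := h (Function.update x₀ i j)
    rw [← Finset.mul_prod_erase Finset.univ _ (Finset.mem_univ i),
        ← Finset.mul_prod_erase Finset.univ _ (Finset.mem_univ i)] at h1
    simp only [Function.update_self] at h1
    have h2 : ∀ l ∈ Finset.univ.erase i, q l (Function.update x₀ i j l) = q l (x₀ l) := by
      intro l hl
      rw [Function.update_of_ne (Finset.ne_of_mem_erase hl)]
    have h3 : ∀ l ∈ Finset.univ.erase i, p l (Function.update x₀ i j l) = p l (x₀ l) := by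
      intro l hl
      rw [Function.update_of_ne (Finset.ne_of_mem_erase hl)]
    rw [Finset.prod_congr rfl h2, Finset.prod_congr rfl h3] at h1
    rw [← hC, ← hD] at h1
    exact h1
  by_cases hDz : D = 0
  · exfalso
    have hpz : ∀ j, p i j = 0 := by
      intro j
      have := key j
      rw [hDz, mul_zero] at this
      have := this.symm
      rcases mul_eq_zero.mp this with h' | h'
      · exact absurd h' hc
      · exact (mul_eq_zero.mp h').resolve_right hCne
    exact hpx i (hpz (x₀ i))
  · have e0 := key 0
    have e1 := key 1
    have : D * (p i 0 * q i 1 - p i 1 * q i 0) = 0 := by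
      have : p i 0 * (q i 1 * D) - p i 1 * (q i 0 * D) = 0 := by
        rw [e0, e1]; ring
      linear_combination this
    have := (mul_eq_zero.mp this).resolve_left hDz
    exact sub_eq_zero.mp this

end Prods

section Prods2
variable {ι : Type*} [Fintype ι] [DecidableEq ι]

/-- P3 : sitewise proportionality gives global proportionality. -/
lemma global_prop_of_det_zero {p q : ι → Fin 2 → ℂ} (hp : ∀ i, ∃ j, p i j ≠ 0)
    (hq : ∀ i, ∃ j, q i j ≠ 0)
    (h : ∀ i, p i 0 * q i 1 = p i 1 * q i 0) :
    ∃ c : ℂ, c ≠ 0 ∧ ∀ x : ι → Fin 2, ∏ i, q i (x i) = c * ∏ i, p i (x i) := by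
  have hγ : ∀ i, ∃ γ : ℂ, γ ≠ 0 ∧ ∀ j, q i j = γ * p i j :=
    fun i => det0_prop (hp i) (hq i) (h i)
  choose γ hγne hγeq using hγ
  refine ⟨∏ i, γ i, Finset.prod_ne_zero_iff.mpr fun i _ => hγne i, fun x => ?_⟩
  rw [← Finset.prod_mul_distrib]
  exact Finset.prod_congr rfl fun i _ => hγeq i (x i)

/-- P4 : products with a nonproportional site are independent. -/
lemma indep_prods {p q : ι → Fin 2 → ℂ} (hp : ∀ i, ∃ j, p i j ≠ 0)
    (hq : ∀ i, ∃ j, q i j ≠ 0) {i₀ : ι}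
    (hdet : p i₀ 0 * q i₀ 1 ≠ p i₀ 1 * q i₀ 0) :
    Indep (fun x : ι → Fin 2 => ∏ i, p i (x i)) (fun x => ∏ i, q i (x i)) := by
  intro A B hAB
  by_cases hA : A = 0
  · subst hA
    constructor
    · rfl
    · obtain ⟨x, hx⟩ := prod_exists_ne_zero hq
      have := hAB x
      simp only [zero_mul, zero_add] at this
      exact (mul_eq_zero.mp this).resolve_right hx
  · exfalso
    by_cases hB : B = 0
    · subst hB
      obtain ⟨x, hx⟩ := prod_exists_ne_zero hp
      have := hAB x
      simp only [zero_mul, add_zero] at this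
      exact hA ((mul_eq_zero.mp this).resolve_right hx)
    · have hglob : ∀ x : ι → Fin 2, ∏ i, q i (x i) = (-A/B) * ∏ i, p i (x i) := by
        intro x
        rw [div_mul_eq_mul_div, eq_div_iff hB]
        linear_combination hAB x
      have := det_zero_of_global_prop hp hq hglob i₀
      exact hdet this

/-- P5 (L2) : a combination `α P + β Q` with both coefficients nonzero, where the
products differ at two sites, is never a product. -/
lemma not_product_combination {p q r : ι → Fin 2 → ℂ}
    (hp : ∀ i, ∃ j, p i j ≠ 0) (hq : ∀ i, ∃ j, q i j ≠ 0) (hr : ∀ i, ∃ j, r i j ≠ 0)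
    {i₁ i₂ : ι} (h12 : i₁ ≠ i₂)
    (hd1 : p i₁ 0 * q i₁ 1 ≠ p i₁ 1 * q i₁ 0)
    (hd2 : p i₂ 0 * q i₂ 1 ≠ p i₂ 1 * q i₂ 0)
    {A B : ℂ} (hA : A ≠ 0) (hB : B ≠ 0)
    (h : ∀ x : ι → Fin 2, ∏ i, r i (x i) = A * ∏ i, p i (x i) + B * ∏ i, q i (x i)) :
    False := by
  -- update-products at i₁
  set p' : ι → Fin 2 → ℂ := Function.update p i₁ (fun _ => 1) with hp'
  set q' : ι → Fin 2 → ℂ := Function.update q i₁ (fun _ => 1) with hq'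
  have hp'nz : ∀ i, ∃ j, p' i j ≠ 0 := by
    intro i
    by_cases hi : i = i₁
    · subst hi; exact ⟨0, by simp [hp']⟩
    · rw [hp']; rw [Function.update_of_ne hi]; exact hp i
  have hq'nz : ∀ i, ∃ j, q' i j ≠ 0 := by
    intro i
    by_cases hi : i = i₁
    · subst hi; exact ⟨0, by simp [hq']⟩
    · rw [hq']; rw [Function.update_of_ne hi]; exact hq i
  have hd2' : p' i₂ 0 * q' i₂ 1 ≠ p' i₂ 1 * q' i₂ 0 := by
    rw [hp', hq', Function.update_of_ne (Ne.symm h12), Function.update_of_ne (Ne.symm h12)]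
    exact hd2
  have hindep := indep_prods hp'nz hq'nz hd2'
  -- key pointwise relation
  have key : ∀ x : ι → Fin 2,
      (A * (r i₁ 1 * p i₁ 0 - r i₁ 0 * p i₁ 1)) * ∏ i, p' i (x i)
      + (B * (r i₁ 1 * q i₁ 0 - r i₁ 0 * q i₁ 1)) * ∏ i, q' i (x i) = 0 := by
    intro x
    have h0 := h (Function.update x i₁ 0)
    have h1 := h (Function.update x i₁ 1)
    have prodsplit : ∀ (v : ι → Fin 2 → ℂ) (j : Fin 2),
        ∏ i, v i (Function.update x i₁ j i)
          = v i₁ j * ∏ i ∈ Finset.univ.erase i₁, v i (x i) := by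
      intro v j
      rw [← Finset.mul_prod_erase Finset.univ _ (Finset.mem_univ i₁)]
      simp only [Function.update_self]
      congr 1
      exact Finset.prod_congr rfl fun l hl =>
        by rw [Function.update_of_ne (Finset.ne_of_mem_erase hl)]
    rw [prodsplit r 0, prodsplit p 0, prodsplit q 0] at h0
    rw [prodsplit r 1, prodsplit p 1, prodsplit q 1] at h1
    have hup : ∏ i, p' i (x i) = ∏ i ∈ Finset.univ.erase i₁, p i (x i) := by
      rw [← Finset.mul_prod_erase Finset.univ _ (Finset.mem_univ i₁)]
      rw [hp', Function.update_self]
      rw [one_mul]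
      exact Finset.prod_congr rfl fun l hl =>
        by rw [Function.update_of_ne (Finset.ne_of_mem_erase hl)]
    have huq : ∏ i, q' i (x i) = ∏ i ∈ Finset.univ.erase i₁, q i (x i) := by
      rw [← Finset.mul_prod_erase Finset.univ _ (Finset.mem_univ i₁)]
      rw [hq', Function.update_self]
      rw [one_mul]
      exact Finset.prod_congr rfl fun l hl =>
        by rw [Function.update_of_ne (Finset.ne_of_mem_erase hl)]
    rw [hup, huq]
    linear_combination r i₁ 0 * h1 - r i₁ 1 * h0
  have hcoef := hindep _ _ key
  have e1 : A * (r i₁ 1 * p i₁ 0 - r i₁ 0 * p i₁ 1) = 0 := hcoef.1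
  have e2 : B * (r i₁ 1 * q i₁ 0 - r i₁ 0 * q i₁ 1) = 0 := hcoef.2
  have f1 : r i₁ 1 * p i₁ 0 = r i₁ 0 * p i₁ 1 := by
    have := (mul_eq_zero.mp e1).resolve_left hA
    linear_combination this
  have f2 : r i₁ 1 * q i₁ 0 = r i₁ 0 * q i₁ 1 := by
    have := (mul_eq_zero.mp e2).resolve_left hB
    linear_combination this
  have g0 : r i₁ 0 * (p i₁ 0 * q i₁ 1 - p i₁ 1 * q i₁ 0) = 0 := by
    linear_combination q i₁ 0 * f1 - p i₁ 0 * f2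
  have g1 : r i₁ 1 * (p i₁ 0 * q i₁ 1 - p i₁ 1 * q i₁ 0) = 0 := by
    linear_combination q i₁ 1 * f1 - p i₁ 1 * f2
  have hdne : p i₁ 0 * q i₁ 1 - p i₁ 1 * q i₁ 0 ≠ 0 := sub_ne_zero.mpr hd1
  obtain ⟨j, hj⟩ := hr i₁
  fin_cases j
  · exact hj ((mul_eq_zero.mp g0).resolve_right hdne)
  · exact hj ((mul_eq_zero.mp g1).resolve_right hdne)

end Prods2

section SumProd
variable {ι : Type*} [Fintype ι] [DecidableEq ι]

/-- inner product of two product states factorizes -/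
lemma sum_prod_mul_conj (p q : ι → Fin 2 → ℂ) :
    ∑ x : ι → Fin 2, (∏ i, p i (x i)) * conj (∏ i, q i (x i))
      = ∏ i, ∑ j, p i j * conj (q i j) := by
  have : ∀ x : ι → Fin 2, (∏ i, p i (x i)) * conj (∏ i, q i (x i))
      = ∏ i, (p i (x i) * conj (q i (x i))) := by
    intro x
    rw [map_prod, ← Finset.prod_mul_distrib]
  rw [Finset.sum_congr rfl fun x _ => this x]
  rw [Finset.prod_univ_sum]
  rw [← Fintype.piFinset_univ]

lemma sum_prodState_mul_conj (p q : ι → Fin 2 → ℂ) :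
    ∑ x : ι → Fin 2, prodState p x * conj (prodState q x)
      = ∏ i, ∑ j, p i j * conj (q i j) := sum_prod_mul_conj p q

lemma unit_exists_ne_zero {v : Fin 2 → ℂ} (hv : IsUnitQubit v) : ∃ j, v j ≠ 0 := by
  by_contra h
  push_neg at h
  have : ∑ j, Complex.normSq (v j) = 0 := by
    refine Finset.sum_eq_zero fun j _ => ?_
    rw [h j, Complex.normSq_zero]
  rw [hv] at this
  norm_num at this

lemma sum_normSq_prod {p : ι → Fin 2 → ℂ} (hp : ∀ i, IsUnitQubit (p i)) :
    ∑ x : ι → Fin 2, ((Complex.normSq (∏ i, p i (x i)) : ℝ) : ℂ) = 1 := by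
  have h1 : ∀ x : ι → Fin 2, ((Complex.normSq (∏ i, p i (x i)) : ℝ) : ℂ)
      = (∏ i, p i (x i)) * conj (∏ i, p i (x i)) := fun x => (Complex.mul_conj _).symm
  rw [Finset.sum_congr rfl fun x _ => h1 x, sum_prod_mul_conj]
  have h2 : ∀ i, (∑ j, p i j * conj (p i j)) = 1 := by
    intro i
    have := hp i
    have h3 : ∑ j, p i j * conj (p i j) = ((∑ j, Complex.normSq (p i j) : ℝ) : ℂ) := by
      push_cast
      exact Finset.sum_congr rfl fun j _ => Complex.mul_conj _
    rw [h3, this]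
    norm_num
  rw [Finset.prod_congr rfl fun i _ => h2 i, Finset.prod_const_one]

/-- orthogonality in ℂ² forces nonvanishing determinant -/
lemma det_ne_zero_of_orth {v w : Fin 2 → ℂ} (hv : ∃ j, v j ≠ 0) (hw : ∃ j, w j ≠ 0)
    (horth : ∑ j, conj (v j) * w j = 0) : v 0 * w 1 ≠ v 1 * w 0 := by
  intro hdet
  obtain ⟨γ, hγ, heq⟩ := det0_prop hv hw hdet
  have : ∑ j, conj (v j) * w j = γ * ∑ j, ((Complex.normSq (v j) : ℝ) : ℂ) := by
    rw [Finset.mul_sum]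
    refine Finset.sum_congr rfl fun j _ => ?_
    rw [heq j, show conj (v j) * (γ * v j) = γ * (v j * conj (v j)) by ring,
      Complex.mul_conj]
  rw [horth] at this
  have hsum : ∑ j, ((Complex.normSq (v j) : ℝ) : ℂ) ≠ 0 := by
    obtain ⟨j₀, hj₀⟩ := hv
    have hpos : 0 < ∑ j, Complex.normSq (v j) := by
      have : 0 < Complex.normSq (v j₀) := Complex.normSq_pos.mpr hj₀
      have hnn : ∀ j ∈ Finset.univ, 0 ≤ Complex.normSq (v j) :=
        fun j _ => Complex.normSq_nonneg _
      calc 0 < Complex.normSq (v j₀) := this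
        _ ≤ ∑ j, Complex.normSq (v j) :=
          Finset.single_le_sum hnn (Finset.mem_univ j₀)
    push_cast
    exact_mod_cast ne_of_gt (by exact_mod_cast hpos : (0:ℝ) < ∑ j, Complex.normSq (v j))
  exact hsum (by
    rcases mul_eq_zero.mp this.symm with h | h
    · exact absurd h hγ
    · exact h)

end SumProd

section Gadgets
variable {N : ℕ}

/-- insert the value `j` at position `k` -/
def sp (k : Fin N) (j : Fin 2) (x : {i : Fin N // i ∉ ({k} : Finset (Fin N))} → Fin 2) :
    Fin N → Fin 2 :=
  mergeCompl {k} x (fun _ => j)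

lemma sp_self (k : Fin N) (j : Fin 2) (x : {i : Fin N // i ∉ ({k} : Finset (Fin N))} → Fin 2) :
    sp k j x k = j := by
  simp [sp, mergeCompl]

lemma sp_ne (k : Fin N) (j : Fin 2) (x : {i : Fin N // i ∉ ({k} : Finset (Fin N))} → Fin 2)
    (i : {i : Fin N // i ∉ ({k} : Finset (Fin N))}) : sp k j x i.1 = x i := by
  simp only [sp, mergeCompl]
  rw [dif_neg i.2]

lemma sp_ne' (k : Fin N) (j : Fin 2) (x : {i : Fin N // i ∉ ({k} : Finset (Fin N))} → Fin 2)
    (l : Fin N) (hl : l ≠ k) : sp k j x l = x ⟨l, by simp [hl]⟩ := by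
  simp only [sp, mergeCompl]
  rw [dif_neg (by simp [hl])]

lemma sp_recon (k : Fin N) (x : Fin N → Fin 2) :
    sp k (x k) (fun i => x i.1) = x := by
  funext i
  by_cases h : i = k
  · subst h; exact sp_self _ _ _
  · rw [sp_ne' k _ _ i h]

/-- assignments split at a point -/
def spE (k : Fin N) : (Fin 2 × ({i : Fin N // i ∉ ({k} : Finset (Fin N))} → Fin 2))
    ≃ (Fin N → Fin 2) where
  toFun p := sp k p.1 p.2
  invFun x := (x k, fun i => x i.1)
  left_inv p := by
    obtain ⟨j, x⟩ := p
    refine Prod.ext ?_ ?_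
    · simp [sp_self]
    · funext i; simp [sp_ne]
  right_inv x := sp_recon k x

lemma sum_split {M : Type*} [AddCommMonoid M] (k : Fin N) (g : (Fin N → Fin 2) → M) :
    ∑ x, g x = ∑ j : Fin 2, ∑ x : {i : Fin N // i ∉ ({k} : Finset (Fin N))} → Fin 2,
      g (sp k j x) := by
  rw [← Equiv.sum_comp (spE k) g, Fintype.sum_prod_type]
  rfl

lemma prod_split (k : Fin N) (v : Fin N → Fin 2 → ℂ) (x : Fin N → Fin 2) :
    ∏ i, v i (x i) = v k (x k) * ∏ i : {i : Fin N // i ∉ ({k} : Finset (Fin N))}, v i.1 (x i.1) := by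
  rw [← Finset.mul_prod_erase Finset.univ _ (Finset.mem_univ k)]
  congr 1
  rw [Finset.prod_subtype (Finset.univ.erase k)
    (p := fun i => i ∉ ({k} : Finset (Fin N))) (fun i => by simp) (fun i => v i (x i))]

lemma prodState_sp (k : Fin N) (v : Fin N → Fin 2 → ℂ) (j : Fin 2)
    (x : {i : Fin N // i ∉ ({k} : Finset (Fin N))} → Fin 2) :
    prodState v (sp k j x) = v k j *
      ∏ i : {i : Fin N // i ∉ ({k} : Finset (Fin N))}, v i.1 (x i) := by
  rw [prodState, prod_split k, sp_self]
  congr 1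
  exact Finset.prod_congr rfl fun i _ => by rw [sp_ne]

instance uniqueMem (k : Fin N) : Unique {i : Fin N // i ∈ ({k} : Finset (Fin N))} where
  default := ⟨k, by simp⟩
  uniq := by
    rintro ⟨i, hi⟩
    simp only [Finset.mem_singleton] at hi
    subst hi
    rfl

lemma reduced_eq (ψ : (Fin N → Fin 2) → ℂ) (k : Fin N)
    (x y : {i : Fin N // i ∉ ({k} : Finset (Fin N))} → Fin 2) :
    reducedState ψ {k} x y = ∑ j : Fin 2, ψ (sp k j x) * conj (ψ (sp k j y)) := by
  rw [reducedState]
  show ∑ z : {i : Fin N // i ∈ ({k} : Finset (Fin N))} → Fin 2,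
      ψ (mergeCompl {k} x z) * conj (ψ (mergeCompl {k} y z)) = _
  rw [← Equiv.sum_comp (Equiv.funUnique {i : Fin N // i ∈ ({k} : Finset (Fin N))} (Fin 2)).symm
    (fun z => ψ (mergeCompl {k} x z) * conj (ψ (mergeCompl {k} y z)))]
  refine Finset.sum_congr rfl fun j _ => ?_
  rfl

end Gadgets


section Step1
variable {N : ℕ}

/-- If the slices of `ψ` at qubit `k` are linearly dependent and `ρ_{¬k}` is separable,
then `ψ` is a product state. -/
lemma step1 (ψ : (Fin N → Fin 2) → ℂ) (hunit : IsUnitState ψ) (k : Fin N)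
    (hsep : IsSeparableDensity (reducedState ψ ({k} : Finset (Fin N))))
    (c₀ c₁ : ℂ) (hc : ¬(c₀ = 0 ∧ c₁ = 0))
    (hdep : ∀ x, c₀ * ψ (sp k 0 x) + c₁ * ψ (sp k 1 x) = 0) :
    IsProductState ψ := by
  classical
  -- factor the slices through a single function u
  obtain ⟨χ, u, hχ, hfac⟩ : ∃ (χ : Fin 2 → ℂ) (u : ({i : Fin N // i ∉ ({k} : Finset (Fin N))}
      → Fin 2) → ℂ), (∃ j, χ j ≠ 0) ∧ ∀ j x, ψ (sp k j x) = χ j * u x := by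
    by_cases hc1 : c₁ = 0
    · have hc0 : c₀ ≠ 0 := fun h => hc ⟨h, hc1⟩
      refine ⟨![0, 1], fun x => ψ (sp k 1 x), ⟨1, by norm_num⟩, ?_⟩
      intro j x
      fin_cases j
      · have := hdep x
        rw [hc1, zero_mul, add_zero] at this
        have := (mul_eq_zero.mp this).resolve_left hc0
        simpa [this]
      · simp
    · refine ⟨![1, -c₀/c₁], fun x => ψ (sp k 0 x), ⟨0, by norm_num⟩, ?_⟩
      intro j x
      fin_cases j
      · simp
      · have := hdep x
        have h1 : ψ (sp k 1 x) = -c₀/c₁ * ψ (sp k 0 x) := by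
          rw [div_mul_eq_mul_div, eq_div_iff hc1]
          linear_combination hdep x
        simpa using h1
  obtain ⟨n, w, es, hw, hsum, hunits, hρ⟩ := hsep
  set V : Fin n → ({i : Fin N // i ∉ ({k} : Finset (Fin N))} → Fin 2) → ℂ :=
    fun m => prodState (es m) with hV
  have hpt : ∀ x y, reducedState ψ ({k} : Finset (Fin N)) x y
      = ∑ m, (w m : ℂ) * (V m x * conj (V m y)) := by
    intro x y
    rw [hρ]
    rw [Matrix.sum_apply]
    refine Finset.sum_congr rfl fun m _ => ?_
    simp [proj, Matrix.smul_apply, smul_eq_mul, hV]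
  set Cs : ℂ := ∑ j, χ j * conj (χ j) with hCs
  have hE : ∀ x y, ∑ m, (w m : ℂ) * (V m x * conj (V m y))
      = ∑ j : Fin 2, (![Cs, 0] j) * ((![u, u] j) x * conj ((![u, u] j) y)) := by
    intro x y
    rw [← hpt x y, reduced_eq]
    rw [Fin.sum_univ_two, Fin.sum_univ_two]
    simp only [Matrix.cons_val_zero, Matrix.cons_val_one, Matrix.head_cons]
    rw [hfac 0 x, hfac 0 y, hfac 1 x, hfac 1 y, hCs, Fin.sum_univ_two]
    simp only [map_mul]
    ring
  have hspan := mem_span_of_decomp hw hE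
  have hm₀ : ∃ m₀, w m₀ ≠ 0 := by
    by_contra h
    push_neg at h
    rw [Finset.sum_congr rfl fun m _ => h m] at hsum
    simp at hsum
  obtain ⟨m₀, hm₀⟩ := hm₀
  obtain ⟨a, b, hab⟩ := hspan m₀ hm₀
  simp only [Matrix.cons_val_zero, Matrix.cons_val_one, Matrix.head_cons] at hab
  set c : ℂ := a + b with hc'
  have habc : ∀ x, V m₀ x = c * u x := fun x => by rw [hab x, hc']; ring
  have hVnz : ∃ x, V m₀ x ≠ 0 := by
    apply prod_exists_ne_zero (p := es m₀)
    exact fun i => unit_exists_ne_zero (hunits m₀ i)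
  have hcnz : c ≠ 0 := by
    intro h0
    obtain ⟨x, hx⟩ := hVnz
    exact hx (by rw [habc x, h0, zero_mul])
  have hu : ∀ x, u x = c⁻¹ * V m₀ x := by
    intro x
    rw [habc x]
    field_simp
  set d : Fin 2 → ℂ := fun j => χ j * c⁻¹ with hd
  have hψx : ∀ x, ψ x = d (x k) * V m₀ (fun i => x i.1) := by
    intro x
    conv_lhs => rw [← sp_recon k x]
    rw [hfac (x k) (fun i => x i.1), hu]
    rw [hd]
    ring
  -- d is a unit qubit
  have hVnorm : ∑ x, Complex.normSq (V m₀ x) = 1 := by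
    have := sum_normSq_prod (fun i => hunits m₀ i)
    exact_mod_cast this
  have hdunit : IsUnitQubit d := by
    have h1 : ∑ x, Complex.normSq (ψ x)
        = ∑ j : Fin 2, ∑ x, Complex.normSq (ψ (sp k j x)) := sum_split k _
    rw [hunit] at h1
    have h2 : ∀ j : Fin 2, ∑ x, Complex.normSq (ψ (sp k j x))
        = Complex.normSq (d j) * 1 := by
      intro j
      rw [← hVnorm, Finset.mul_sum]
      refine Finset.sum_congr rfl fun x _ => ?_
      have h3 : ψ (sp k j x) = d j * V m₀ x := by
        rw [hfac j x, hu x, hd]; ring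
      rw [h3, Complex.normSq_mul]
    rw [Finset.sum_congr rfl fun j _ => h2 j] at h1
    simp only [mul_one] at h1
    exact h1.symm
  set E : Fin N → Fin 2 → ℂ :=
    fun l => if h : l = k then d else es m₀ ⟨l, by simp [h]⟩ with hEdef
  have hEk : E k = d := by
    rw [hEdef]
    show dite _ _ _ = _
    exact dif_pos rfl
  have hEi : ∀ i : {i : Fin N // i ∉ ({k} : Finset (Fin N))}, E i.1 = es m₀ i := by
    intro i
    have h4 : i.1 ≠ k := by simpa using i.2
    rw [hEdef]
    show dite _ _ _ = _
    rw [dif_neg h4]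
  refine ⟨E, fun l => ?_, funext fun x => ?_⟩
  · by_cases h : l = k
    · subst h; rw [hEk]; exact hdunit
    · have h5 : l ∉ ({k} : Finset (Fin N)) := by simpa using h
      rw [hEi ⟨l, h5⟩]; exact hunits m₀ _
  · calc ψ x = d (x k) * V m₀ (fun i => x i.1) := hψx x
      _ = E k (x k) * ∏ i : {i : Fin N // i ∉ ({k} : Finset (Fin N))}, E i.1 (x i.1) := by
          rw [hEk]
          congr 1
          simp only [hV, prodState]
          exact (Finset.prod_congr rfl fun i _ => (congrFun (hEi i) _)).symm
      _ = ∏ l, E l (x l) := (prod_split k E x).symm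
      _ = prodState E x := rfl

end Step1

section MidLevel
variable {α : Type*} [Fintype α] [DecidableEq α]

/-- Extract vanishing of the cross coefficient. -/
lemma cross_vanish {P Q : α → ℂ} (hPQ : Indep P Q)
    {sl : Fin 2 → α → ℂ} {va vb : Fin 2 → ℂ}
    (hsl : ∀ j x, sl j x = va j * P x + vb j * Q x)
    {s t : ℂ}
    (h : ∀ x y, ∑ j : Fin 2, sl j x * conj (sl j y)
      = s * (P x * conj (P y)) + t * (Q x * conj (Q y))) :
    ∑ j : Fin 2, va j * conj (vb j) = 0 := by
  have key := dyad_indep hPQ (A := (∑ j : Fin 2, va j * conj (va j)) - s)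
    (B := ∑ j : Fin 2, va j * conj (vb j))
    (C := ∑ j : Fin 2, vb j * conj (va j))
    (D := (∑ j : Fin 2, vb j * conj (vb j)) - t) ?_
  · exact key.2.1
  · intro x y
    have h' := h x y
    simp only [Fin.sum_univ_two] at h'
    rw [hsl 0 x, hsl 0 y, hsl 1 x, hsl 1 y] at h'
    simp only [map_add, map_mul] at h'
    simp only [Fin.sum_univ_two]
    linear_combination h'

variable {ι : Type*} [Fintype ι] [DecidableEq ι]

/-- A separable decomposition supported in the span of two products collapses onto
the two rays. -/
lemma rho_decomp {p q : ι → Fin 2 → ℂ}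
    (hp : ∀ i, ∃ j, p i j ≠ 0) (hq : ∀ i, ∃ j, q i j ≠ 0)
    {i₁ i₂ : ι} (h12 : i₁ ≠ i₂)
    (hd1 : p i₁ 0 * q i₁ 1 ≠ p i₁ 1 * q i₁ 0)
    (hd2 : p i₂ 0 * q i₂ 1 ≠ p i₂ 1 * q i₂ 0)
    {n : ℕ} {w : Fin n → ℝ} {es : Fin n → ι → Fin 2 → ℂ} (hw : ∀ m, 0 ≤ w m)
    (hunits : ∀ m i, IsUnitQubit (es m i))
    (hspan : ∀ m, w m ≠ 0 → ∃ a b : ℂ, ∀ x,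
      prodState (es m) x = a * prodState p x + b * prodState q x) :
    ∃ s t : ℂ, ∀ x y,
      ∑ m, (w m : ℂ) * (prodState (es m) x * conj (prodState (es m) y))
        = s * (prodState p x * conj (prodState p y))
          + t * (prodState q x * conj (prodState q y)) := by
  classical
  set γ : Fin n → ℂ := fun m => if h : w m = 0 then 0 else (hspan m h).choose with hγ
  set δ : Fin n → ℂ := fun m =>
    if h : w m = 0 then 0 else (hspan m h).choose_spec.choose with hδ
  have hγδ : ∀ m, w m ≠ 0 → ∀ x,
      prodState (es m) x = γ m * prodState p x + δ m * prodState q x := by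
    intro m hm x
    rw [hγ, hδ]
    simp only [dif_neg hm]
    exact (hspan m hm).choose_spec.choose_spec x
  have hzero : ∀ m, w m ≠ 0 → γ m * δ m = 0 := by
    intro m hm
    by_contra hne
    have hγne : γ m ≠ 0 := fun h => hne (by rw [h, zero_mul])
    have hδne : δ m ≠ 0 := fun h => hne (by rw [h, mul_zero])
    exact not_product_combination hp hq
      (fun i => unit_exists_ne_zero (hunits m i)) h12 hd1 hd2 hγne hδne
      (fun x => hγδ m hm x)
  refine ⟨∑ m, (w m : ℂ) * (γ m * conj (γ m)), ∑ m, (w m : ℂ) * (δ m * conj (δ m)), ?_⟩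
  intro x y
  rw [Finset.sum_mul, Finset.sum_mul, ← Finset.sum_add_distrib]
  refine Finset.sum_congr rfl fun m _ => ?_
  by_cases hm : w m = 0
  · rw [hm]; push_cast; ring
  · have hx := hγδ m hm x
    have hy := hγδ m hm y
    rw [hx, hy]
    simp only [map_add, map_mul]
    rcases mul_eq_zero.mp (hzero m hm) with h0 | h0 <;>
      simp only [h0, map_zero, zero_mul, mul_zero, add_zero, zero_add] <;> ring

end MidLevel

section Decompose
variable {N : ℕ}

lemma exists_two_ne (hN : 3 ≤ N) (k : Fin N) :
    ∃ l₁ l₂ : Fin N, l₁ ≠ l₂ ∧ l₁ ≠ k ∧ l₂ ≠ k := by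
  have h0 : (0:ℕ) < N := by omega
  have h1 : (1:ℕ) < N := by omega
  have h2 : (2:ℕ) < N := by omega
  by_cases hk0 : k = ⟨0, h0⟩
  · exact ⟨⟨1,h1⟩, ⟨2,h2⟩, by simp [Fin.ext_iff], by simp [hk0, Fin.ext_iff],
      by simp [hk0, Fin.ext_iff]⟩
  · by_cases hk1 : k = ⟨1,h1⟩
    · exact ⟨⟨0,h0⟩, ⟨2,h2⟩, by simp [Fin.ext_iff], by simp [hk1, Fin.ext_iff],
        by simp [hk1, Fin.ext_iff]⟩
    · exact ⟨⟨0,h0⟩, ⟨1,h1⟩, by simp [Fin.ext_iff],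
        fun h => hk0 h.symm, fun h => hk1 h.symm⟩

lemma slices_indep (ψ : (Fin N → Fin 2) → ℂ) (hunit : IsUnitState ψ)
    (hent : ¬ IsProductState ψ)
    (hsep : ∀ k : Fin N, IsSeparableDensity (reducedState ψ ({k} : Finset (Fin N))))
    (k : Fin N) :
    Indep (fun x => ψ (sp k 0 x)) (fun x => ψ (sp k 1 x)) := by
  intro A B hAB
  by_contra hcon
  exact hent (step1 ψ hunit k (hsep k) A B hcon hAB)

/-- pointwise form of the separability hypothesis at `k` -/
lemma sep_pointwise (ψ : (Fin N → Fin 2) → ℂ) (k : Fin N)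
    {n : ℕ} {w : Fin n → ℝ} {es : Fin n → {i : Fin N // i ∉ ({k} : Finset (Fin N))} → Fin 2 → ℂ}
    (hρ : reducedState ψ ({k} : Finset (Fin N))
      = ∑ m, (w m : ℂ) • proj (prodState (es m)))
    (x y : {i : Fin N // i ∉ ({k} : Finset (Fin N))} → Fin 2) :
    ∑ j : Fin 2, ψ (sp k j x) * conj (ψ (sp k j y))
      = ∑ m, (w m : ℂ) * (prodState (es m) x * conj (prodState (es m) y)) := by
  rw [← reduced_eq, hρ, Matrix.sum_apply]
  refine Finset.sum_congr rfl fun m _ => ?_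
  simp [proj, Matrix.smul_apply, smul_eq_mul]

lemma sep_span (ψ : (Fin N → Fin 2) → ℂ) (k : Fin N)
    {n : ℕ} {w : Fin n → ℝ} {es : Fin n → {i : Fin N // i ∉ ({k} : Finset (Fin N))} → Fin 2 → ℂ}
    (hw : ∀ m, 0 ≤ w m)
    (hρ : reducedState ψ ({k} : Finset (Fin N))
      = ∑ m, (w m : ℂ) • proj (prodState (es m))) :
    ∀ m, w m ≠ 0 → ∃ a b : ℂ, ∀ x, prodState (es m) x
      = a * ψ (sp k 0 x) + b * ψ (sp k 1 x) := by
  have hE : ∀ x y, ∑ m, (w m : ℂ) * (prodState (es m) x * conj (prodState (es m) y))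
      = ∑ j : Fin 2, (![(1:ℂ), 1] j) *
        ((![fun x => ψ (sp k 0 x), fun x => ψ (sp k 1 x)] j) x
          * conj ((![fun x => ψ (sp k 0 x), fun x => ψ (sp k 1 x)] j) y)) := by
    intro x y
    rw [← sep_pointwise ψ k hρ x y]
    simp only [Fin.sum_univ_two, Matrix.cons_val_zero, Matrix.cons_val_one, Matrix.head_cons]
    ring
  intro m hm
  obtain ⟨a, b, hab⟩ := mem_span_of_decomp hw hE m hm
  exact ⟨a, b, fun x => by simpa using hab x⟩

/-- The main decomposition at a fixed qubit `k`. -/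
lemma decompose_at (hN : 3 ≤ N) (ψ : (Fin N → Fin 2) → ℂ) (hunit : IsUnitState ψ)
    (hent : ¬ IsProductState ψ)
    (hsep : ∀ k : Fin N, IsSeparableDensity (reducedState ψ ({k} : Finset (Fin N))))
    (k : Fin N) :
    ∃ (va vb : Fin 2 → ℂ) (p q : {i : Fin N // i ∉ ({k} : Finset (Fin N))} → Fin 2 → ℂ),
      (∀ i, IsUnitQubit (p i)) ∧ (∀ i, IsUnitQubit (q i)) ∧
      (∀ i, p i 0 * q i 1 ≠ p i 1 * q i 0) ∧
      (∃ j, va j ≠ 0) ∧ (∃ j, vb j ≠ 0) ∧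
      (∑ j : Fin 2, va j * conj (vb j) = 0) ∧
      (∀ j x, ψ (sp k j x) = va j * prodState p x + vb j * prodState q x) := by
  classical
  have hslind := slices_indep ψ hunit hent hsep
  have hind : Indep (fun x => ψ (sp k 0 x)) (fun x => ψ (sp k 1 x)) := hslind k
  obtain ⟨n, w, es, hw, hsum, hunits, hρ⟩ := hsep k
  have hVnz : ∀ m, ∃ x, prodState (es m) x ≠ 0 :=
    fun m => prod_exists_ne_zero (fun i => unit_exists_ne_zero (hunits m i))
  have hspan := sep_span ψ k hw hρ
  have hm₀ : ∃ m₀, w m₀ ≠ 0 := by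
    by_contra h
    push_neg at h
    rw [Finset.sum_congr rfl fun m _ => h m] at hsum
    simp at hsum
  -- two independent members of the decomposition
  have hex : ∃ m₁ m₂, w m₁ ≠ 0 ∧ w m₂ ≠ 0 ∧ Indep (prodState (es m₁)) (prodState (es m₂)) := by
    by_contra hno
    push_neg at hno
    obtain ⟨m₀, hm₀⟩ := hm₀
    obtain ⟨A₀, B₀, hV₀⟩ := hspan m₀ hm₀
    have hprop : ∀ m, w m ≠ 0 → ∃ γ : ℂ, ∀ x, prodState (es m) x = γ * prodState (es m₀) x := by
      intro m hm
      have hnind := hno m₀ m hm₀ hm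
      rw [Indep] at hnind
      push_neg at hnind
      obtain ⟨A, B, hABx, hnz⟩ := hnind
      have hBne : B ≠ 0 := by
        intro hB
        have hA : A ≠ 0 := fun hA0 => (hnz hA0) hB
        obtain ⟨x, hx⟩ := hVnz m₀
        have h2 := hABx x
        rw [hB, zero_mul, add_zero] at h2
        exact hx ((mul_eq_zero.mp h2).resolve_left hA)
      refine ⟨-A/B, fun x => ?_⟩
      rw [div_mul_eq_mul_div, eq_div_iff hBne]
      linear_combination hABx x
    set γ' : Fin n → ℂ := fun m => if h : w m = 0 then 0 else (hprop m h).choose with hγ'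
    have hγ'eq : ∀ m, w m ≠ 0 → ∀ x, prodState (es m) x = γ' m * prodState (es m₀) x := by
      intro m hm x
      rw [hγ']
      simp only [dif_neg hm]
      exact (hprop m hm).choose_spec x
    set S : ℂ := ∑ m, (w m : ℂ) * (γ' m * conj (γ' m)) with hS'
    have hS : ∀ x y, ψ (sp k 0 x) * conj (ψ (sp k 0 y)) + ψ (sp k 1 x) * conj (ψ (sp k 1 y))
        = S * (prodState (es m₀) x * conj (prodState (es m₀) y)) := by
      intro x y
      have h1 := sep_pointwise ψ k hρ x y
      rw [Fin.sum_univ_two] at h1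
      rw [h1, hS', Finset.sum_mul]
      refine Finset.sum_congr rfl fun m _ => ?_
      by_cases hm : w m = 0
      · rw [hm]; push_cast; ring
      · rw [hγ'eq m hm x, hγ'eq m hm y, map_mul]
        ring
    have h2 : ∀ y, (conj (ψ (sp k 0 y)) - S * A₀ * conj (prodState (es m₀) y) = 0) ∧
        (conj (ψ (sp k 1 y)) - S * B₀ * conj (prodState (es m₀) y) = 0) := by
      intro y
      refine hind _ _ (fun x => ?_)
      linear_combination hS x y + S * conj (prodState (es m₀) y) * hV₀ x
    have h3 : ∀ y, ψ (sp k 0 y) = conj (S * A₀) * prodState (es m₀) y := by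
      intro y
      have := sub_eq_zero.mp (h2 y).1
      have h4 := congrArg conj this
      simpa [map_mul, Complex.conj_conj, mul_comm, mul_assoc, mul_left_comm] using h4
    have h4 : ∀ y, ψ (sp k 1 y) = conj (S * B₀) * prodState (es m₀) y := by
      intro y
      have := sub_eq_zero.mp (h2 y).2
      have h5 := congrArg conj this
      simpa [map_mul, Complex.conj_conj, mul_comm, mul_assoc, mul_left_comm] using h5
    have h5 : ∀ x, conj (S * B₀) * ψ (sp k 0 x) + (-(conj (S * A₀))) * ψ (sp k 1 x) = 0 := by
      intro x
      rw [h3 x, h4 x]; ring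
    have h6 := hind _ _ h5
    have h7 : ∀ x, ψ (sp k 0 x) = 0 := by
      intro x
      rw [h3 x, show conj (S * A₀) = 0 from by simpa using h6.2, zero_mul]
    have h8 := hind 1 0 (fun x =>
      show (1:ℂ) * ψ (sp k 0 x) + (0:ℂ) * ψ (sp k 1 x) = 0 by rw [h7 x]; ring)
    exact one_ne_zero h8.1
  obtain ⟨m₁, m₂, hm₁, hm₂, hPQ⟩ := hex
  obtain ⟨A₁, B₁, hP⟩ := hspan m₁ hm₁
  obtain ⟨A₂, B₂, hQ⟩ := hspan m₂ hm₂
  set Δ : ℂ := A₁ * B₂ - A₂ * B₁ with hΔ'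
  have hΔ : Δ ≠ 0 := by
    intro h0
    have hrel : ∀ x, B₂ * prodState (es m₁) x + (-B₁) * prodState (es m₂) x = 0 := by
      intro x
      rw [hP x, hQ x]
      linear_combination ψ (sp k 0 x) * h0
    have h9 := hPQ _ _ hrel
    have hB₁ : B₁ = 0 := by simpa using h9.2
    have hB₂ : B₂ = 0 := h9.1
    have hrel2 : ∀ x, A₂ * prodState (es m₁) x + (-A₁) * prodState (es m₂) x = 0 := by
      intro x
      rw [hP x, hQ x, hB₁, hB₂]; ring
    have h10 := hPQ _ _ hrel2
    have hA₁ : A₁ = 0 := by simpa using h10.2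
    obtain ⟨x, hx⟩ := hVnz m₁
    exact hx (by rw [hP x, hA₁, hB₁]; ring)
  set va : Fin 2 → ℂ := ![Δ⁻¹ * B₂, -(Δ⁻¹ * A₂)] with hva'
  set vb : Fin 2 → ℂ := ![-(Δ⁻¹ * B₁), Δ⁻¹ * A₁] with hvb'
  have hslPQ : ∀ j x, ψ (sp k j x) = va j * prodState (es m₁) x + vb j * prodState (es m₂) x := by
    intro j x
    have e1 := hP x
    have e2 := hQ x
    have key0 : Δ * ψ (sp k 0 x) = B₂ * prodState (es m₁) x + (-B₁) * prodState (es m₂) x := by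
      linear_combination B₁ * e2 - B₂ * e1 + ψ (sp k 0 x) * hΔ'
    have key1 : Δ * ψ (sp k 1 x) = (-A₂) * prodState (es m₁) x + A₁ * prodState (es m₂) x := by
      linear_combination A₂ * e1 - A₁ * e2 + ψ (sp k 1 x) * hΔ'
    have hΔi : Δ⁻¹ * Δ = 1 := inv_mul_cancel₀ hΔ
    fin_cases j
    · show ψ (sp k 0 x) = va 0 * prodState (es m₁) x + vb 0 * prodState (es m₂) x
      rw [hva', hvb']
      simp only [Matrix.cons_val_zero]
      calc ψ (sp k 0 x) = Δ⁻¹ * (Δ * ψ (sp k 0 x)) := by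
            rw [← mul_assoc, hΔi, one_mul]
        _ = Δ⁻¹ * B₂ * prodState (es m₁) x + -(Δ⁻¹ * B₁) * prodState (es m₂) x := by rw [key0]; ring
    · show ψ (sp k 1 x) = va 1 * prodState (es m₁) x + vb 1 * prodState (es m₂) x
      rw [hva', hvb']
      simp only [Matrix.cons_val_one, Matrix.head_cons]
      calc ψ (sp k 1 x) = Δ⁻¹ * (Δ * ψ (sp k 1 x)) := by
            rw [← mul_assoc, hΔi, one_mul]
        _ = -(Δ⁻¹ * A₂) * prodState (es m₁) x + Δ⁻¹ * A₁ * prodState (es m₂) x := by rw [key1]; ring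
  have hpnz : ∀ i, ∃ j, es m₁ i j ≠ 0 := fun i => unit_exists_ne_zero (hunits m₁ i)
  have hqnz : ∀ i, ∃ j, es m₂ i j ≠ 0 := fun i => unit_exists_ne_zero (hunits m₂ i)
  -- all sitewise determinants are nonzero
  have hdet : ∀ i : {i : Fin N // i ∉ ({k} : Finset (Fin N))},
      es m₁ i 0 * es m₂ i 1 ≠ es m₁ i 1 * es m₂ i 0 := by
    intro i hdi
    obtain ⟨γ, hγ, hγeq⟩ := det0_prop (hpnz i) (hqnz i) hdi
    have hmk : i.1 ∉ ({k} : Finset (Fin N)) := i.2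
    have hkm : k ≠ i.1 := fun h => (Finset.notMem_singleton.mp hmk) h.symm
    have hdepm : ∀ yh,
        (es m₁ i 1) * ψ (sp i.1 0 yh) + (-(es m₁ i 0)) * ψ (sp i.1 1 yh) = 0 := by
      intro yh
      have hval : ∀ j : Fin 2, ψ (sp i.1 j yh) = es m₁ i j *
          (va ((sp i.1 j yh) k) *
            ∏ l ∈ Finset.univ.erase i, es m₁ l ((sp i.1 j yh) l.1)
           + γ * vb ((sp i.1 j yh) k) *
            ∏ l ∈ Finset.univ.erase i, es m₂ l ((sp i.1 j yh) l.1)) := by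
        intro j
        have h12 : ψ (sp i.1 j yh) = va ((sp i.1 j yh) k) * prodState (es m₁) (fun i' => (sp i.1 j yh) i'.1)
            + vb ((sp i.1 j yh) k) * prodState (es m₂) (fun i' => (sp i.1 j yh) i'.1) := by
          conv_lhs => rw [← sp_recon k (sp i.1 j yh)]
          exact hslPQ _ _
        rw [h12]
        have hprod1 : prodState (es m₁) (fun i' => (sp i.1 j yh) i'.1)
            = es m₁ i ((sp i.1 j yh) i.1) *
              ∏ l ∈ Finset.univ.erase i, es m₁ l ((sp i.1 j yh) l.1) := by
          show ∏ i', es m₁ i' ((sp i.1 j yh) i'.1) = _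
          exact (Finset.mul_prod_erase Finset.univ _ (Finset.mem_univ i)).symm
        have hprod2 : prodState (es m₂) (fun i' => (sp i.1 j yh) i'.1)
            = es m₂ i ((sp i.1 j yh) i.1) *
              ∏ l ∈ Finset.univ.erase i, es m₂ l ((sp i.1 j yh) l.1) := by
          show ∏ i', es m₂ i' ((sp i.1 j yh) i'.1) = _
          exact (Finset.mul_prod_erase Finset.univ _ (Finset.mem_univ i)).symm
        have hself : (sp i.1 j yh) i.1 = j := sp_self i.1 j yh
        rw [hprod1, hprod2, hself, hγeq j]
        ring
      rw [hval 0, hval 1]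
      have hagree : ∀ l : Fin N, l ≠ i.1 → sp i.1 0 yh l = sp i.1 1 yh l := by
        intro l hl
        rw [sp_ne' i.1 _ _ l hl, sp_ne' i.1 _ _ l hl]
      have hp1 : ∏ l ∈ Finset.univ.erase i, es m₁ l ((sp i.1 0 yh) l.1)
          = ∏ l ∈ Finset.univ.erase i, es m₁ l ((sp i.1 1 yh) l.1) :=
        Finset.prod_congr rfl fun l hl => by
          rw [hagree l.1 (fun h => (Finset.ne_of_mem_erase hl) (Subtype.ext h))]
      have hp2 : ∏ l ∈ Finset.univ.erase i, es m₂ l ((sp i.1 0 yh) l.1)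
          = ∏ l ∈ Finset.univ.erase i, es m₂ l ((sp i.1 1 yh) l.1) :=
        Finset.prod_congr rfl fun l hl => by
          rw [hagree l.1 (fun h => (Finset.ne_of_mem_erase hl) (Subtype.ext h))]
      rw [hagree k hkm, hp1, hp2]
      ring
    have h13 := hslind i.1 _ _ hdepm
    obtain ⟨j₀, hj₀⟩ := hpnz i
    fin_cases j₀
    · exact hj₀ (by simpa using h13.2)
    · exact hj₀ h13.1
  -- two distinct sites
  obtain ⟨l₁, l₂, hl12, hl1k, hl2k⟩ := exists_two_ne hN k
  set i₁ : {i : Fin N // i ∉ ({k} : Finset (Fin N))} := ⟨l₁, by simp [hl1k]⟩ with hi₁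
  set i₂ : {i : Fin N // i ∉ ({k} : Finset (Fin N))} := ⟨l₂, by simp [hl2k]⟩ with hi₂
  have h12 : i₁ ≠ i₂ := fun h => hl12 (congrArg Subtype.val h)
  -- decomposition collapses onto the two rays
  have hspan' : ∀ m, w m ≠ 0 → ∃ a b : ℂ, ∀ x,
      prodState (es m) x = a * prodState (es m₁) x + b * prodState (es m₂) x := by
    intro m hm
    obtain ⟨A, B, hab⟩ := hspan m hm
    refine ⟨A * va 0 + B * va 1, A * vb 0 + B * vb 1, fun x => ?_⟩
    have := hab x
    rw [hslPQ 0 x, hslPQ 1 x] at this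
    rw [this]
    ring
  obtain ⟨s, t, hst⟩ := rho_decomp hpnz hqnz h12 (hdet i₁) (hdet i₂) hw hunits hspan'
  have hcv : ∑ j : Fin 2, va j * conj (vb j) = 0 := by
    refine cross_vanish hPQ (sl := fun j x => ψ (sp k j x)) hslPQ (s := s) (t := t) ?_
    intro x y
    rw [sep_pointwise ψ k hρ x y]
    exact hst x y
  -- va, vb nonzero
  have hva : ∃ j, va j ≠ 0 := by
    by_contra h
    push_neg at h
    have h14 : ∀ x, (vb 1) * ψ (sp k 0 x) + (-(vb 0)) * ψ (sp k 1 x) = 0 := by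
      intro x
      rw [hslPQ 0 x, hslPQ 1 x, h 0, h 1]; ring
    have h15 := hind _ _ h14
    have h16 : ∀ x, ψ (sp k 0 x) = 0 := by
      intro x
      rw [hslPQ 0 x, h 0, show vb 0 = 0 from by simpa using h15.2]; ring
    have h17 := hind 1 0 (fun x =>
      show (1:ℂ) * ψ (sp k 0 x) + (0:ℂ) * ψ (sp k 1 x) = 0 by rw [h16 x]; ring)
    exact one_ne_zero h17.1
  have hvb : ∃ j, vb j ≠ 0 := by
    by_contra h
    push_neg at h
    have h14 : ∀ x, (va 1) * ψ (sp k 0 x) + (-(va 0)) * ψ (sp k 1 x) = 0 := by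
      intro x
      rw [hslPQ 0 x, hslPQ 1 x, h 0, h 1]; ring
    have h15 := hind _ _ h14
    have h16 : ∀ x, ψ (sp k 0 x) = 0 := by
      intro x
      rw [hslPQ 0 x, h 0, show va 0 = 0 from by simpa using h15.2]; ring
    have h17 := hind 1 0 (fun x =>
      show (1:ℂ) * ψ (sp k 0 x) + (0:ℂ) * ψ (sp k 1 x) = 0 by rw [h16 x]; ring)
    exact one_ne_zero h17.1
  exact ⟨va, vb, es m₁, es m₂, hunits m₁, hunits m₂, hdet, hva, hvb, hcv, hslPQ⟩

end Decompose

section Forward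
variable {N : ℕ}

lemma sum_normSq_pos {v : Fin 2 → ℂ} (hv : ∃ j, v j ≠ 0) :
    0 < ∑ j, Complex.normSq (v j) := by
  obtain ⟨j₀, hj₀⟩ := hv
  calc (0:ℝ) < Complex.normSq (v j₀) := Complex.normSq_pos.mpr hj₀
    _ ≤ ∑ j, Complex.normSq (v j) :=
      Finset.single_le_sum (fun j _ => Complex.normSq_nonneg _) (Finset.mem_univ j₀)

/-- The forward direction : fragility forces the generalized GHZ form with positive
real coefficients. -/
lemma forward (hN : 3 ≤ N) (ψ : (Fin N → Fin 2) → ℂ) (hunit : IsUnitState ψ)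
    (hent : ¬ IsProductState ψ)
    (hsep : ∀ k : Fin N, IsSeparableDensity (reducedState ψ ({k} : Finset (Fin N)))) :
    ∃ (a b : ℝ) (e f : Fin N → Fin 2 → ℂ),
      0 < a ∧ 0 < b ∧ a ^ 2 + b ^ 2 = 1 ∧
      (∀ i, IsUnitQubit (e i)) ∧ (∀ i, IsUnitQubit (f i)) ∧
      (∀ i, ∑ j, conj (e i j) * f i j = 0) ∧
      ψ = fun x => (a : ℂ) * prodState e x + (b : ℂ) * prodState f x := by
  classical
  have h0N : (0:ℕ) < N := by omega
  set k₀ : Fin N := ⟨0, h0N⟩ with hk₀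
  obtain ⟨va, vb, p, q, hpu, hqu, hdet, hva, hvb, horthk, hsl⟩ :=
    decompose_at hN ψ hunit hent hsep k₀
  set na : ℝ := Real.sqrt (∑ j, Complex.normSq (va j)) with hna'
  set nb : ℝ := Real.sqrt (∑ j, Complex.normSq (vb j)) with hnb'
  have hvapos := sum_normSq_pos hva
  have hvbpos := sum_normSq_pos hvb
  have hnapos : 0 < na := Real.sqrt_pos.mpr hvapos
  have hnbpos : 0 < nb := Real.sqrt_pos.mpr hvbpos
  have hna2 : na ^ 2 = ∑ j, Complex.normSq (va j) := Real.sq_sqrt hvapos.le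
  have hnb2 : nb ^ 2 = ∑ j, Complex.normSq (vb j) := Real.sq_sqrt hvbpos.le
  have hna0 : (na : ℂ) ≠ 0 := by exact_mod_cast hnapos.ne'
  have hnb0 : (nb : ℂ) ≠ 0 := by exact_mod_cast hnbpos.ne'
  set e : Fin N → Fin 2 → ℂ :=
    fun l => if h : l = k₀ then (fun j => (na:ℂ)⁻¹ * va j) else p ⟨l, by simp [h]⟩ with hedef
  set f : Fin N → Fin 2 → ℂ :=
    fun l => if h : l = k₀ then (fun j => (nb:ℂ)⁻¹ * vb j) else q ⟨l, by simp [h]⟩ with hfdef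
  have hek : e k₀ = fun j => (na:ℂ)⁻¹ * va j := by
    rw [hedef]
    show dite _ _ _ = _
    exact dif_pos rfl
  have hfk : f k₀ = fun j => (nb:ℂ)⁻¹ * vb j := by
    rw [hfdef]
    show dite _ _ _ = _
    exact dif_pos rfl
  have hei : ∀ i : {l : Fin N // l ∉ ({k₀} : Finset (Fin N))}, e i.1 = p i := by
    intro i
    have h4 : i.1 ≠ k₀ := by simpa using i.2
    rw [hedef]
    show dite _ _ _ = _
    rw [dif_neg h4]
  have hfi : ∀ i : {l : Fin N // l ∉ ({k₀} : Finset (Fin N))}, f i.1 = q i := by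
    intro i
    have h4 : i.1 ≠ k₀ := by simpa using i.2
    rw [hfdef]
    show dite _ _ _ = _
    rw [dif_neg h4]
  -- units
  have hnremul : ∀ (r : ℝ) (v : Fin 2 → ℂ), ∑ j, Complex.normSq ((r:ℂ)⁻¹ * v j)
      = (r⁻¹)^2 * ∑ j, Complex.normSq (v j) := by
    intro r v
    rw [Finset.mul_sum]
    refine Finset.sum_congr rfl fun j _ => ?_
    rw [Complex.normSq_mul, ← Complex.ofReal_inv, Complex.normSq_ofReal]
    ring
  have heu : ∀ i, IsUnitQubit (e i) := by
    intro i
    by_cases h : i = k₀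
    · subst h
      rw [IsUnitQubit]
      simp only [hek]
      rw [hnremul na va, ← hna2]
      field_simp
    · have h5 : i ∉ ({k₀} : Finset (Fin N)) := by simpa using h
      rw [hei ⟨i, h5⟩]
      exact hpu _
  have hfu : ∀ i, IsUnitQubit (f i) := by
    intro i
    by_cases h : i = k₀
    · subst h
      rw [IsUnitQubit]
      simp only [hfk]
      rw [hnremul nb vb, ← hnb2]
      field_simp
    · have h5 : i ∉ ({k₀} : Finset (Fin N)) := by simpa using h
      rw [hfi ⟨i, h5⟩]
      exact hqu _
  -- orthogonality at k₀
  have horth0 : ∑ j, conj (e k₀ j) * f k₀ j = 0 := by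
    simp only [hek, hfk]
    have : ∀ j : Fin 2, conj ((na:ℂ)⁻¹ * va j) * ((nb:ℂ)⁻¹ * vb j)
        = ((na:ℂ)⁻¹ * (nb:ℂ)⁻¹) * (conj (va j) * vb j) := by
      intro j
      rw [map_mul, ← Complex.ofReal_inv, Complex.conj_ofReal]
      push_cast
      ring
    rw [Finset.sum_congr rfl fun j _ => this j, ← Finset.mul_sum]
    have h6 : ∑ j : Fin 2, conj (va j) * vb j = 0 := by
      have := congrArg conj horthk
      simpa [map_sum, map_mul, Complex.conj_conj, mul_comm] using this
    rw [h6, mul_zero]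
  -- the state
  have hψeq : ∀ x, ψ x = (na:ℂ) * prodState e x + (nb:ℂ) * prodState f x := by
    intro x
    have hpe : prodState e x = ((na:ℂ)⁻¹ * va (x k₀)) * prodState p (fun i => x i.1) := by
      calc prodState e x = e k₀ (x k₀) *
            ∏ i : {l : Fin N // l ∉ ({k₀} : Finset (Fin N))}, e i.1 (x i.1) :=
          prod_split k₀ e x
        _ = ((na:ℂ)⁻¹ * va (x k₀)) *
            ∏ i : {l : Fin N // l ∉ ({k₀} : Finset (Fin N))}, p i (x i.1) := by
          rw [hek]
          congr 1
          exact Finset.prod_congr rfl fun i _ => by rw [hei i]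
        _ = _ := rfl
    have hpf : prodState f x = ((nb:ℂ)⁻¹ * vb (x k₀)) * prodState q (fun i => x i.1) := by
      calc prodState f x = f k₀ (x k₀) *
            ∏ i : {l : Fin N // l ∉ ({k₀} : Finset (Fin N))}, f i.1 (x i.1) :=
          prod_split k₀ f x
        _ = ((nb:ℂ)⁻¹ * vb (x k₀)) *
            ∏ i : {l : Fin N // l ∉ ({k₀} : Finset (Fin N))}, q i (x i.1) := by
          rw [hfk]
          congr 1
          exact Finset.prod_congr rfl fun i _ => by rw [hfi i]
        _ = _ := rfl
    have h7 : ψ x = va (x k₀) * prodState p (fun i => x i.1)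
        + vb (x k₀) * prodState q (fun i => x i.1) := by
      conv_lhs => rw [← sp_recon k₀ x]
      exact hsl _ _
    rw [h7, hpe, hpf]
    field_simp
  -- orthogonality at every site
  have horth : ∀ i, ∑ j, conj (e i j) * f i j = 0 := by
    intro κ
    by_cases hκ : κ = k₀
    · subst hκ; exact horth0
    · -- J-step at κ
      have hκ' : κ ∉ ({k₀} : Finset (Fin N)) := by simpa using hκ
      set ee : {l : Fin N // l ∉ ({κ} : Finset (Fin N))} → Fin 2 → ℂ := fun i => e i.1 with hee
      set ff : {l : Fin N // l ∉ ({κ} : Finset (Fin N))} → Fin 2 → ℂ := fun i => f i.1 with hff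
      have heenz : ∀ i, ∃ j, ee i j ≠ 0 := fun i => unit_exists_ne_zero (heu i.1)
      have hffnz : ∀ i, ∃ j, ff i j ≠ 0 := fun i => unit_exists_ne_zero (hfu i.1)
      -- determinants at all sites of the full register
      have edets : ∀ i : Fin N, e i 0 * f i 1 ≠ e i 1 * f i 0 := by
        intro i
        by_cases h : i = k₀
        · subst h
          exact det_ne_zero_of_orth (unit_exists_ne_zero (heu k₀))
            (unit_exists_ne_zero (hfu k₀)) horth0
        · have h5 : i ∉ ({k₀} : Finset (Fin N)) := by simpa using h
          rw [hei ⟨i, h5⟩, hfi ⟨i, h5⟩]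
          exact hdet ⟨i, h5⟩
      have hdets : ∀ i : {l : Fin N // l ∉ ({κ} : Finset (Fin N))},
          ee i 0 * ff i 1 ≠ ee i 1 * ff i 0 := fun i => edets i.1
      -- independence of the two partial products
      have hIεζ : Indep (prodState ee) (prodState ff) := by
        have := indep_prods heenz hffnz (i₀ := ⟨k₀, by simpa using (Ne.symm hκ)⟩)
          (hdets ⟨k₀, by simpa using (Ne.symm hκ)⟩)
        exact this
      -- slices at κ
      have hslκ : ∀ (j : Fin 2) yh, ψ (sp κ j yh)
          = ((na:ℂ) * e κ j) * prodState ee yh + ((nb:ℂ) * f κ j) * prodState ff yh := by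
        intro j yh
        rw [hψeq (sp κ j yh)]
        rw [prodState_sp κ e j yh, prodState_sp κ f j yh]
        show (na:ℂ) * (e κ j * prodState ee yh) + (nb:ℂ) * (f κ j * prodState ff yh) = _
        ring
      obtain ⟨n, w, es, hw, hsum, hunits, hρ⟩ := hsep κ
      have hspanκ := sep_span ψ κ hw hρ
      have hspan' : ∀ m, w m ≠ 0 → ∃ a b : ℂ, ∀ x,
          prodState (es m) x = a * prodState ee x + b * prodState ff x := by
        intro m hm
        obtain ⟨A, B, hab⟩ := hspanκ m hm
        refine ⟨A * ((na:ℂ) * e κ 0) + B * ((na:ℂ) * e κ 1),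
          A * ((nb:ℂ) * f κ 0) + B * ((nb:ℂ) * f κ 1), fun x => ?_⟩
        rw [hab x, hslκ 0 x, hslκ 1 x]
        ring
      obtain ⟨l₁, l₂, hl12, hl1κ, hl2κ⟩ := exists_two_ne hN κ
      have h12 : (⟨l₁, by simp [hl1κ]⟩ : {l : Fin N // l ∉ ({κ} : Finset (Fin N))})
          ≠ ⟨l₂, by simp [hl2κ]⟩ := fun h => hl12 (congrArg Subtype.val h)
      obtain ⟨s, t, hst⟩ := rho_decomp heenz hffnz h12
        (hdets ⟨l₁, by simp [hl1κ]⟩) (hdets ⟨l₂, by simp [hl2κ]⟩) hw hunits hspan'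
      have hcv : ∑ j : Fin 2, ((na:ℂ) * e κ j) * conj ((nb:ℂ) * f κ j) = 0 := by
        refine cross_vanish hIεζ (sl := fun j x => ψ (sp κ j x))
          (va := fun j => (na:ℂ) * e κ j) (vb := fun j => (nb:ℂ) * f κ j)
          (fun j x => hslκ j x) (s := s) (t := t) ?_
        intro x y
        rw [sep_pointwise ψ κ hρ x y]
        exact hst x y
      -- extract
      have h8 : ((na:ℂ) * (nb:ℂ)) * ∑ j : Fin 2, e κ j * conj (f κ j) = 0 := by
        rw [Finset.mul_sum, ← hcv]
        refine Finset.sum_congr rfl fun j _ => ?_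
        rw [map_mul, Complex.conj_ofReal]
        ring
      have h9 : ∑ j : Fin 2, e κ j * conj (f κ j) = 0 := by
        rcases mul_eq_zero.mp h8 with h' | h'
        · exact absurd h' (mul_ne_zero hna0 hnb0)
        · exact h'
      have := congrArg conj h9
      simpa [map_sum, map_mul, Complex.conj_conj, mul_comm] using this
  -- normalization
  have hsum1 : ((na:ℂ)) * (na:ℂ) + ((nb:ℂ)) * (nb:ℂ) = 1 := by
    have hψψ : ∀ x, ψ x * conj (ψ x)
        = ((na:ℂ) * (na:ℂ)) * (prodState e x * conj (prodState e x))
          + ((na:ℂ) * (nb:ℂ)) * (prodState e x * conj (prodState f x))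
          + ((nb:ℂ) * (na:ℂ)) * (prodState f x * conj (prodState e x))
          + ((nb:ℂ) * (nb:ℂ)) * (prodState f x * conj (prodState f x)) := by
      intro x
      rw [hψeq x]
      simp only [map_add, map_mul, Complex.conj_ofReal]
      ring
    have hEE : ∑ x, prodState e x * conj (prodState e x) = 1 := by
      have h10 := sum_prodState_mul_conj e e
      have h11 : ∀ i : Fin N, (∑ j, e i j * conj (e i j)) = 1 := by
        intro i
        have h12 : ∑ j, e i j * conj (e i j) = ((∑ j, Complex.normSq (e i j) : ℝ) : ℂ) := by
          push_cast
          exact Finset.sum_congr rfl fun j _ => (Complex.mul_conj _)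
        rw [h12, heu i]
        norm_num
      rw [h10, Finset.prod_congr rfl fun i _ => h11 i, Finset.prod_const_one]
    have hFF : ∑ x, prodState f x * conj (prodState f x) = 1 := by
      have h10 := sum_prodState_mul_conj f f
      have h11 : ∀ i : Fin N, (∑ j, f i j * conj (f i j)) = 1 := by
        intro i
        have h12 : ∑ j, f i j * conj (f i j) = ((∑ j, Complex.normSq (f i j) : ℝ) : ℂ) := by
          push_cast
          exact Finset.sum_congr rfl fun j _ => (Complex.mul_conj _)
        rw [h12, hfu i]
        norm_num
      rw [h10, Finset.prod_congr rfl fun i _ => h11 i, Finset.prod_const_one]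
    have hEF : ∑ x, prodState e x * conj (prodState f x) = 0 := by
      rw [sum_prodState_mul_conj e f]
      refine Finset.prod_eq_zero (Finset.mem_univ k₀) ?_
      have := congrArg conj (horth k₀)
      simpa [map_sum, map_mul, Complex.conj_conj, mul_comm] using this
    have hFE : ∑ x, prodState f x * conj (prodState e x) = 0 := by
      rw [sum_prodState_mul_conj f e]
      refine Finset.prod_eq_zero (Finset.mem_univ k₀) ?_
      simpa [mul_comm] using horth k₀
    have htot : ∑ x, ψ x * conj (ψ x) = 1 := by
      have h13 : ∑ x, ψ x * conj (ψ x) = ((∑ x, Complex.normSq (ψ x) : ℝ) : ℂ) := by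
        push_cast
        exact Finset.sum_congr rfl fun x _ => (Complex.mul_conj _)
      rw [h13, hunit]
      norm_num
    rw [Finset.sum_congr rfl fun x _ => hψψ x] at htot
    simp only [Finset.sum_add_distrib, ← Finset.mul_sum] at htot
    rw [hEE, hFF, hEF, hFE] at htot
    simpa using htot
  have hab1 : na ^ 2 + nb ^ 2 = 1 := by
    have : ((na ^ 2 + nb ^ 2 : ℝ) : ℂ) = 1 := by
      push_cast
      linear_combination hsum1
    exact_mod_cast this
  exact ⟨na, nb, e, f, hnapos, hnbpos, hab1, heu, hfu, horth, funext fun x => hψeq x⟩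

end Forward

section Reverse
variable {N : ℕ}

lemma reverse (ψ : (Fin N → Fin 2) → ℂ) (a b : ℂ) (e f : Fin N → Fin 2 → ℂ) (c : ℂ)
    (hab : Complex.normSq a + Complex.normSq b = 1)
    (heu : ∀ i, IsUnitQubit (e i)) (hfu : ∀ i, IsUnitQubit (f i))
    (horth : ∀ i, ∑ j, conj (e i j) * f i j = 0)
    (habs : ‖c‖ = 1)
    (hψ : ψ = fun x => c * (a * prodState e x + b * prodState f x)) :
    ∀ k : Fin N, IsSeparableDensity (reducedState ψ ({k} : Finset (Fin N))) := by
  intro k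
  have hψ' : ∀ x, ψ x = c * (a * prodState e x + b * prodState f x) := by
    intro x; rw [hψ]
  set ee : {l : Fin N // l ∉ ({k} : Finset (Fin N))} → Fin 2 → ℂ := fun i => e i.1 with hee
  set ff : {l : Fin N // l ∉ ({k} : Finset (Fin N))} → Fin 2 → ℂ := fun i => f i.1 with hff
  have hPE : ∀ z, prodState ee z
      = ∏ i : {l : Fin N // l ∉ ({k} : Finset (Fin N))}, e i.1 (z i) := fun z => rfl
  have hPF : ∀ z, prodState ff z
      = ∏ i : {l : Fin N // l ∉ ({k} : Finset (Fin N))}, f i.1 (z i) := fun z => rfl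
  have hval : ∀ (j : Fin 2) z, ψ (sp k j z)
      = c * a * e k j * prodState ee z + c * b * f k j * prodState ff z := by
    intro j z
    rw [hψ' (sp k j z), prodState_sp k e j z, prodState_sp k f j z, hPE z, hPF z]
    ring
  have he1 : e k 0 * conj (e k 0) + e k 1 * conj (e k 1) = 1 := by
    have h12 : ∑ j, e k j * conj (e k j) = ((∑ j, Complex.normSq (e k j) : ℝ) : ℂ) := by
      push_cast
      exact Finset.sum_congr rfl fun j _ => (Complex.mul_conj _)
    have h13 := h12
    rw [heu k] at h13
    rw [Fin.sum_univ_two] at h13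
    simpa using h13
  have hf1 : f k 0 * conj (f k 0) + f k 1 * conj (f k 1) = 1 := by
    have h12 : ∑ j, f k j * conj (f k j) = ((∑ j, Complex.normSq (f k j) : ℝ) : ℂ) := by
      push_cast
      exact Finset.sum_congr rfl fun j _ => (Complex.mul_conj _)
    have h13 := h12
    rw [hfu k] at h13
    rw [Fin.sum_univ_two] at h13
    simpa using h13
  have hfe : f k 0 * conj (e k 0) + f k 1 * conj (e k 1) = 0 := by
    have := horth k
    rw [Fin.sum_univ_two] at this
    linear_combination this
  have hef : e k 0 * conj (f k 0) + e k 1 * conj (f k 1) = 0 := by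
    have := congrArg conj (horth k)
    rw [Fin.sum_univ_two] at this
    simp only [map_add, map_mul, Complex.conj_conj, map_zero] at this
    linear_combination this
  have hcc : c * conj c = 1 := by
    rw [Complex.mul_conj]
    rw [Complex.normSq_eq_norm_sq, habs]
    norm_num
  refine ⟨2, ![Complex.normSq a, Complex.normSq b], ![ee, ff], ?_, ?_, ?_, ?_⟩
  · intro m
    fin_cases m <;> simp [Complex.normSq_nonneg]
  · rw [Fin.sum_univ_two]
    simpa using hab
  · intro m i
    fin_cases m
    · simpa using heu i.1
    · simpa using hfu i.1
  · ext x y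
    rw [Matrix.sum_apply, Fin.sum_univ_two]
    simp only [Matrix.cons_val_zero, Matrix.cons_val_one, Matrix.head_cons,
      Matrix.smul_apply, proj, Matrix.of_apply, smul_eq_mul]
    rw [show reducedState ψ ({k} : Finset (Fin N)) x y
      = ∑ j : Fin 2, ψ (sp k j x) * conj (ψ (sp k j y)) from reduced_eq ψ k x y]
    rw [Fin.sum_univ_two, hval 0 x, hval 0 y, hval 1 x, hval 1 y]
    simp only [map_add, map_mul]
    rw [show ((Complex.normSq a : ℝ) : ℂ) = a * conj a from (Complex.mul_conj a).symm,
      show ((Complex.normSq b : ℝ) : ℂ) = b * conj b from (Complex.mul_conj b).symm]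
    linear_combination (c * conj c * a * conj a * (prodState ee x * conj (prodState ee y))) * he1
      + (c * conj c * a * conj b * (prodState ee x * conj (prodState ff y))) * hef
      + (c * conj c * b * conj a * (prodState ff x * conj (prodState ee y))) * hfe
      + (c * conj c * b * conj b * (prodState ff x * conj (prodState ff y))) * hf1
      + (a * conj a * (prodState ee x * conj (prodState ee y))
         + b * conj b * (prodState ff x * conj (prodState ff y))) * hcc

end Reverse

/-- **Corollary 1 of the paper.** For `N ≥ 3`, an entangled `N`-qubit pure state
`ψ` is fragile with respect to the loss of any single qubit if and only if, up to a global
phase, `ψ = a |e₁,…,e_N⟩ + b |e₁^⊥,…,e_N^⊥⟩` for nonzero complex numbers `a, b` with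
`|a|² + |b|² = 1` and pairs of orthonormal single-qubit vectors `(e i, f i)`; moreover `a` and
`b` can always be chosen real and positive. -/
theorem fragile_all_iff_polygonal_form {N : ℕ} (hN : 3 ≤ N)
    (ψ : (Fin N → Fin 2) → ℂ) (hunit : IsUnitState ψ) (hent : IsEntangledState ψ) :
    ((∀ k : Fin N, IsSeparableDensity (reducedState ψ ({k} : Finset (Fin N)))) ↔
      ∃ (a b : ℂ) (e f : Fin N → Fin 2 → ℂ) (c : ℂ),
        a ≠ 0 ∧ b ≠ 0 ∧ Complex.normSq a + Complex.normSq b = 1 ∧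
        (∀ i, IsUnitQubit (e i)) ∧ (∀ i, IsUnitQubit (f i)) ∧
        (∀ i, ∑ j, conj (e i j) * f i j = 0) ∧
        ‖c‖ = 1 ∧
        ψ = fun x => c * (a * prodState e x + b * prodState f x))
    ∧
    ((∀ k : Fin N, IsSeparableDensity (reducedState ψ ({k} : Finset (Fin N)))) →
      ∃ (a b : ℝ) (e f : Fin N → Fin 2 → ℂ) (c : ℂ),
        0 < a ∧ 0 < b ∧ a ^ 2 + b ^ 2 = 1 ∧
        (∀ i, IsUnitQubit (e i)) ∧ (∀ i, IsUnitQubit (f i)) ∧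
        (∀ i, ∑ j, conj (e i j) * f i j = 0) ∧
        ‖c‖ = 1 ∧
        ψ = fun x => c * ((a : ℂ) * prodState e x + (b : ℂ) * prodState f x)) := by
  constructor
  · constructor
    · intro hfr
      obtain ⟨a, b, e, f, ha, hb, hab, heu, hfu, horth, hψ⟩ :=
        forward hN ψ hunit hent hfr
      refine ⟨(a : ℂ), (b : ℂ), e, f, 1, ?_, ?_, ?_, heu, hfu, horth, by simp, ?_⟩
      · exact_mod_cast ha.ne'
      · exact_mod_cast hb.ne'
      · rw [Complex.normSq_ofReal, Complex.normSq_ofReal]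
        linear_combination hab
      · rw [hψ]
        funext x
        ring
    · rintro ⟨a, b, e, f, c, ha, hb, hab, heu, hfu, horth, habs, hψ⟩
      exact reverse ψ a b e f c hab heu hfu horth habs hψ
  · intro hfr
    obtain ⟨a, b, e, f, ha, hb, hab, heu, hfu, horth, hψ⟩ :=
      forward hN ψ hunit hent hfr
    refine ⟨a, b, e, f, 1, ha, hb, hab, heu, hfu, horth, by simp, ?_⟩
    rw [hψ]
    funext x
    ring
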